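/- Let 1 ≤ p < ∞ and let X be a real Banach space. Then X is p-divisible if and only if for all finite-dimensional real Banach spaces A and B that are finitely representable in X, the direct sum A ⊕_p B (with norm ‖(a,b)‖ = (‖a‖^p + ‖b‖^p)^{1/p}) is finitely representable in X. -/

import Mathlib

open scoped ENNReal ZeroAtInfty

/-- A bundled real Banach space. -/
structure BanachSpace where
  carrier : Type
  [g : NormedAddCommGroup carrier]
  [s : NormedSpace ℝ carrier]
  [c : CompleteSpace carrier]

attribute [instance] BanachSpace.g BanachSpace.s BanachSpace.c

instance : CoeSort BanachSpace Type := ⟨BanachSpace.carrier⟩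

/-- `X` is finitely representable in `Y`: every finite-dimensional subspace of `X` is
`(1+ε)`-isomorphic to a subspace of `Y`. -/
def FinRep (X : Type*) [NormedAddCommGroup X] [NormedSpace ℝ X]
    (Y : Type*) [NormedAddCommGroup Y] [NormedSpace ℝ Y] : Prop :=
  ∀ ε : ℝ, 0 < ε → ∀ A : Subspace ℝ X, FiniteDimensional ℝ A →
    ∃ B : Subspace ℝ Y, ∃ u : A ≃L[ℝ] B,
      ‖(u : A →L[ℝ] B)‖ * ‖(u.symm : B →L[ℝ] A)‖ ≤ 1 + ε

/-- `X` and `Y` are finitely equivalent. -/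
def FinEquiv (X : Type*) [NormedAddCommGroup X] [NormedSpace ℝ X]
    (Y : Type*) [NormedAddCommGroup Y] [NormedSpace ℝ Y] : Prop :=
  FinRep X Y ∧ FinRep Y X

/-- `X` is `p`-divisible: some Banach space `Y` finitely equivalent to `X` has its
`ℓ_p`-sum `ℓ_p(Y)` finitely equivalent to `X`. -/
def PDivisible (p : ℝ≥0∞) (hp : 1 ≤ p) (X : Type*) [NormedAddCommGroup X]
    [NormedSpace ℝ X] : Prop :=
  haveI : Fact (1 ≤ p) := ⟨hp⟩
  ∃ Y : BanachSpace, FinEquiv X Y.carrier ∧ FinEquiv X (lp (fun _ : ℕ => Y.carrier) p)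

/-- `X` has a closed subspace isomorphic (linearly homeomorphic) to `Z`. -/
def HasClosedSubspaceIso (X : Type*) [NormedAddCommGroup X] [NormedSpace ℝ X]
    (Z : Type*) [NormedAddCommGroup Z] [NormedSpace ℝ Z] : Prop :=
  ∃ S : Subspace ℝ X, IsClosed (S : Set X) ∧ Nonempty (S ≃L[ℝ] Z)

/-- `X` has a closed subspace isomorphic to the classical space `ℓ_p`. -/
def HasLpSubspace (X : Type*) [NormedAddCommGroup X] [NormedSpace ℝ X]
    (p : ℝ≥0∞) (hp : 1 ≤ p) : Prop :=
  haveI : Fact (1 ≤ p) := ⟨hp⟩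
  HasClosedSubspaceIso X (lp (fun _ : ℕ => ℝ) p)

/-- The Tsirelson property: no closed subspace isomorphic to `ℓ_p` (`1 ≤ p < ∞`) or to `c₀`. -/
def TsirelsonProperty (X : Type*) [NormedAddCommGroup X] [NormedSpace ℝ X] : Prop :=
  (∀ (p : ℝ≥0∞) (hp : 1 ≤ p), p ≠ ∞ → ¬ HasLpSubspace X p hp) ∧
    ¬ HasClosedSubspaceIso X C₀(ℕ, ℝ)

set_option maxHeartbeats 1000000
set_option synthInstance.maxHeartbeats 200000
set_option linter.unusedSectionVars false
set_option linter.unusedVariables false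

section EmbMachinery

variable {X Y Z W : Type*}
variable [NormedAddCommGroup X] [NormedSpace ℝ X]
variable [NormedAddCommGroup Y] [NormedSpace ℝ Y]
variable [NormedAddCommGroup Z] [NormedSpace ℝ Z]
variable [NormedAddCommGroup W] [NormedSpace ℝ W]

/-- `Z` is `C`-embeddable as a subspace of `Y`. -/
def Emb (Z : Type*) [NormedAddCommGroup Z] [NormedSpace ℝ Z]
    (Y : Type*) [NormedAddCommGroup Y] [NormedSpace ℝ Y] (C : ℝ) : Prop :=
  ∃ B : Subspace ℝ Y, ∃ u : Z ≃L[ℝ] B,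
    ‖(u : Z →L[ℝ] B)‖ * ‖(u.symm : B →L[ℝ] Z)‖ ≤ C

theorem finRep_iff_emb : FinRep X Y ↔
    ∀ ε : ℝ, 0 < ε → ∀ A : Subspace ℝ X, FiniteDimensional ℝ A → Emb A Y (1 + ε) :=
  Iff.rfl

theorem Emb.mono {C C' : ℝ} (h : Emb Z Y C) (hCC' : C ≤ C') : Emb Z Y C' := by
  obtain ⟨B, u, hu⟩ := h; exact ⟨B, u, hu.trans hCC'⟩

/-- The isometry of `Z` with the top subspace of `Z`. -/
def topLIE (Z : Type*) [NormedAddCommGroup Z] [NormedSpace ℝ Z] :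
    Z ≃ₗᵢ[ℝ] (⊤ : Subspace ℝ Z) :=
  ⟨(Submodule.topEquiv (R := ℝ) (M := Z)).symm, fun _ => rfl⟩

theorem li_norm_le (e : Z ≃ₗᵢ[ℝ] W) :
    ‖((e.toContinuousLinearEquiv : Z ≃L[ℝ] W) : Z →L[ℝ] W)‖ ≤ 1 :=
  ContinuousLinearMap.opNorm_le_bound _ zero_le_one fun x => by
    simp [e.norm_map]

theorem li_symm_norm_le (e : Z ≃ₗᵢ[ℝ] W) :
    ‖((e.toContinuousLinearEquiv).symm : W →L[ℝ] Z)‖ ≤ 1 :=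
  ContinuousLinearMap.opNorm_le_bound _ zero_le_one fun x => by
    have h : ((e.toContinuousLinearEquiv.symm : W →L[ℝ] Z) x) = e.symm x := rfl
    rw [h, e.symm.norm_map, one_mul]

theorem norm_trans_bound (u : Z ≃L[ℝ] W) (v : W ≃L[ℝ] Y) :
    ‖((u.trans v) : Z →L[ℝ] Y)‖ * ‖((u.trans v).symm : Y →L[ℝ] Z)‖ ≤
      (‖(u : Z →L[ℝ] W)‖ * ‖(u.symm : W →L[ℝ] Z)‖) *
        (‖(v : W →L[ℝ] Y)‖ * ‖(v.symm : Y →L[ℝ] W)‖) := by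
  have h1 : ‖((u.trans v) : Z →L[ℝ] Y)‖ ≤ ‖(v : W →L[ℝ] Y)‖ * ‖(u : Z →L[ℝ] W)‖ :=
    ContinuousLinearMap.opNorm_le_bound _ (by positivity) fun x => by
      have h : ((u.trans v : Z →L[ℝ] Y) x) = (v : W →L[ℝ] Y) ((u : Z →L[ℝ] W) x) := rfl
      rw [h, mul_assoc]
      exact le_trans ((v : W →L[ℝ] Y).le_opNorm _)
        (mul_le_mul_of_nonneg_left ((u : Z →L[ℝ] W).le_opNorm x) (norm_nonneg _))
  have h2 : ‖((u.trans v).symm : Y →L[ℝ] Z)‖ ≤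
      ‖(u.symm : W →L[ℝ] Z)‖ * ‖(v.symm : Y →L[ℝ] W)‖ :=
    ContinuousLinearMap.opNorm_le_bound _ (by positivity) fun x => by
      have h : (((u.trans v).symm : Y →L[ℝ] Z) x) =
        (u.symm : W →L[ℝ] Z) ((v.symm : Y →L[ℝ] W) x) := rfl
      rw [h, mul_assoc]
      exact le_trans ((u.symm : W →L[ℝ] Z).le_opNorm _)
        (mul_le_mul_of_nonneg_left ((v.symm : Y →L[ℝ] W).le_opNorm x) (norm_nonneg _))
  calc ‖((u.trans v) : Z →L[ℝ] Y)‖ * ‖((u.trans v).symm : Y →L[ℝ] Z)‖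
      ≤ (‖(v : W →L[ℝ] Y)‖ * ‖(u : Z →L[ℝ] W)‖) *
        (‖(u.symm : W →L[ℝ] Z)‖ * ‖(v.symm : Y →L[ℝ] W)‖) :=
        mul_le_mul h1 h2 (norm_nonneg _) (by positivity)
    _ = _ := by ring

theorem Emb.of_equiv {C : ℝ} (u : Z ≃L[ℝ] W) (h : Emb W Y C) :
    Emb Z Y ((‖(u : Z →L[ℝ] W)‖ * ‖(u.symm : W →L[ℝ] Z)‖) * C) := by
  obtain ⟨B, v, hv⟩ := h
  have h0 : (0:ℝ) ≤ ‖(u : Z →L[ℝ] W)‖ * ‖(u.symm : W →L[ℝ] Z)‖ := by positivity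
  exact ⟨B, u.trans v, (norm_trans_bound u v).trans (mul_le_mul_of_nonneg_left hv h0)⟩

theorem Emb.of_li {C : ℝ} (e : Z ≃ₗᵢ[ℝ] W) (h : Emb W Y C) : Emb Z Y C := by
  obtain ⟨B, v, hv⟩ := h
  have h0 : (0:ℝ) ≤ C := le_trans (by positivity) hv
  have := Emb.of_equiv e.toContinuousLinearEquiv ⟨B, v, hv⟩
  refine this.mono ?_
  calc (‖(e.toContinuousLinearEquiv : Z →L[ℝ] W)‖ *
      ‖(e.toContinuousLinearEquiv.symm : W →L[ℝ] Z)‖) * C ≤ (1 * 1) * C := by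
        exact mul_le_mul_of_nonneg_right
          (mul_le_mul (li_norm_le e) (li_symm_norm_le e) (norm_nonneg _) zero_le_one) h0
    _ = C := by ring

theorem emb_self {C : ℝ} (hC : 1 ≤ C) : Emb Z Z C := by
  refine ⟨⊤, (topLIE Z).toContinuousLinearEquiv, ?_⟩
  calc ‖((topLIE Z).toContinuousLinearEquiv : Z →L[ℝ] (⊤ : Subspace ℝ Z))‖ *
      ‖((topLIE Z).toContinuousLinearEquiv.symm : (⊤ : Subspace ℝ Z) →L[ℝ] Z)‖
      ≤ 1 * 1 := mul_le_mul (li_norm_le _) (li_symm_norm_le _)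
        (ContinuousLinearMap.opNorm_nonneg _) zero_le_one
    _ ≤ C := by linarith

end EmbMachinery

section EmbMachinery2

variable {X Y Z W : Type*}
variable [NormedAddCommGroup X] [NormedSpace ℝ X]
variable [NormedAddCommGroup Y] [NormedSpace ℝ Y]
variable [NormedAddCommGroup Z] [NormedSpace ℝ Z]
variable [NormedAddCommGroup W] [NormedSpace ℝ W]

theorem Emb.of_linearIsometry {C : ℝ} [FiniteDimensional ℝ Z] (f : Z →ₗᵢ[ℝ] W)
    (h : Emb W Y C) : Emb Z Y C := by
  obtain ⟨B, u, hu⟩ := h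
  set g : Z →ₗ[ℝ] Y := (B.subtype.comp (u : W →L[ℝ] B).toLinearMap).comp f.toLinearMap with hg
  have hginj : Function.Injective g := by
    intro a b hab
    apply f.injective
    apply u.injective
    apply Subtype.ext
    exact hab
  have hgval : ∀ x : Z, g x = ((u (f x) : B) : Y) := fun x => rfl
  set e₀ := LinearEquiv.ofInjective g hginj with he₀
  set e := e₀.toContinuousLinearEquiv with he
  have hval : ∀ x : Z, ((e x : LinearMap.range g) : Y) = g x := fun x => rfl
  have hnorm : ∀ x : Z, ‖e x‖ = ‖u (f x)‖ := by
    intro x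
    have : ‖e x‖ = ‖((e x : LinearMap.range g) : Y)‖ := rfl
    rw [this, hval, hgval]
    rfl
  refine ⟨LinearMap.range g, e, ?_⟩
  have hb1 : ‖(e : Z →L[ℝ] LinearMap.range g)‖ ≤ ‖(u : W →L[ℝ] B)‖ :=
    ContinuousLinearMap.opNorm_le_bound _ (ContinuousLinearMap.opNorm_nonneg _) fun x => by
      have h1 : ((e : Z →L[ℝ] LinearMap.range g) x) = e x := rfl
      rw [h1, hnorm x, ← f.norm_map x]
      exact (u : W →L[ℝ] B).le_opNorm _
  have hb2 : ‖(e.symm : LinearMap.range g →L[ℝ] Z)‖ ≤ ‖(u.symm : B →L[ℝ] W)‖ :=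
    ContinuousLinearMap.opNorm_le_bound _ (ContinuousLinearMap.opNorm_nonneg _) fun y => by
      have h1 : ((e.symm : LinearMap.range g →L[ℝ] Z) y) = e.symm y := rfl
      rw [h1]
      set x := e.symm y with hx
      have hy : e x = y := e.apply_symm_apply y
      have h2 : ‖x‖ = ‖u.symm (u (f x))‖ := by rw [u.symm_apply_apply, f.norm_map]
      have h3 : ‖u.symm (u (f x))‖ ≤ ‖(u.symm : B →L[ℝ] W)‖ * ‖u (f x)‖ :=
        (u.symm : B →L[ℝ] W).le_opNorm _
      rw [h2]
      refine h3.trans ?_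
      rw [← hnorm x, hy]
  calc ‖(e : Z →L[ℝ] LinearMap.range g)‖ * ‖(e.symm : LinearMap.range g →L[ℝ] Z)‖
      ≤ ‖(u : W →L[ℝ] B)‖ * ‖(u.symm : B →L[ℝ] W)‖ :=
        mul_le_mul hb1 hb2 (ContinuousLinearMap.opNorm_nonneg _)
          (ContinuousLinearMap.opNorm_nonneg _)
    _ ≤ C := hu

theorem Emb.trans_finRep {C : ℝ} [FiniteDimensional ℝ Z] (h1 : Emb Z Y C)
    (h2 : FinRep Y W) {ε : ℝ} (hε : 0 < ε) : Emb Z W (C * (1 + ε)) := by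
  obtain ⟨B, u, hu⟩ := h1
  haveI : FiniteDimensional ℝ B := u.toLinearEquiv.finiteDimensional
  obtain ⟨D, v, hv⟩ := h2 ε hε B inferInstance
  refine ⟨D, u.trans v, (norm_trans_bound u v).trans ?_⟩
  exact mul_le_mul hu hv (by positivity) (le_trans (by positivity) hu)

theorem finRep_of_li (f : X →ₗᵢ[ℝ] Y) : FinRep X Y := fun ε hε A _ =>
  Emb.of_linearIsometry (f.comp A.subtypeₗᵢ) (emb_self (by linarith))

theorem finRep_refl : FinRep X X := finRep_of_li (LinearIsometry.id)

theorem finRep_trans (hxy : FinRep X Y) (hyz : FinRep Y Z) : FinRep X Z := by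
  intro ε hε A hA
  set δ : ℝ := min (ε / 3) 1 with hδdef
  have hδ : 0 < δ := lt_min (by linarith) one_pos
  have hδ1 : δ ≤ 1 := min_le_right _ _
  have hδε : 3 * δ ≤ ε := by
    have := min_le_left (ε / 3) 1
    nlinarith
  have e1 : Emb A Y (1 + δ) := hxy δ hδ A hA
  have e2 : Emb A Z ((1 + δ) * (1 + δ)) := e1.trans_finRep hyz hδ
  exact e2.mono (by nlinarith)

theorem emb_of_finRep [FiniteDimensional ℝ Z] (h : FinRep Z Y) {ε : ℝ} (hε : 0 < ε) :
    Emb Z Y (1 + ε) :=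
  Emb.of_li (topLIE Z) (h ε hε ⊤ inferInstance)

theorem finRep_of_emb (h : ∀ ε : ℝ, 0 < ε → Emb Z Y (1 + ε)) : FinRep Z Y :=
  fun ε hε A _ => Emb.of_linearIsometry A.subtypeₗᵢ (h ε hε)

/-- A normalized embedding: the forward map is a contraction. -/
theorem Emb.normalized {C : ℝ} (hC : 0 ≤ C) (h : Emb Z Y C) :
    ∃ B : Subspace ℝ Y, ∃ u : Z ≃L[ℝ] B,
      ‖(u : Z →L[ℝ] B)‖ ≤ 1 ∧ ‖(u.symm : B →L[ℝ] Z)‖ ≤ C := by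
  obtain ⟨B, u, hu⟩ := h
  by_cases hz : ‖(u : Z →L[ℝ] B)‖ = 0
  · refine ⟨B, u, by rw [hz]; exact zero_le_one, ?_⟩
    have hu0 : (u : Z →L[ℝ] B) = 0 := by
      ext x
      have := (u : Z →L[ℝ] B).le_opNorm x
      rw [hz, zero_mul] at this
      simpa using le_antisymm this (norm_nonneg _)
    have : ∀ y : B, u.symm y = 0 := by
      intro y
      have hy : (y : B) = u (u.symm y) := (u.apply_symm_apply y).symm
      have h0 : u (u.symm y) = 0 := by
        have : (u : Z →L[ℝ] B) (u.symm y) = 0 := by rw [hu0]; rfl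
        simpa using this
      have : (y : B) = 0 := by rw [hy, h0]
      rw [this]
      simp
    have : ‖(u.symm : B →L[ℝ] Z)‖ = 0 := by
      have : (u.symm : B →L[ℝ] Z) = 0 := by ext y; exact this y
      rw [this]; exact ContinuousLinearMap.opNorm_zero
    rw [this]; exact hC
  · have hpos : 0 < ‖(u : Z →L[ℝ] B)‖ :=
      lt_of_le_of_ne (ContinuousLinearMap.opNorm_nonneg _) (Ne.symm hz)
    set c : ℝ := ‖(u : Z →L[ℝ] B)‖ with hc
    have hcne : (c : ℝ) ≠ 0 := ne_of_gt hpos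
    have hcinv : (c⁻¹ : ℝ) ≠ 0 := inv_ne_zero hcne
    -- the rescaling equivalence on B
    set s : B ≃L[ℝ] B :=
      { toLinearEquiv := LinearEquiv.smulOfUnit (Units.mk0 (c⁻¹ : ℝ) hcinv)
        continuous_toFun := continuous_const_smul _
        continuous_invFun := continuous_const_smul _ } with hs
    have hs_apply : ∀ b : B, s b = c⁻¹ • b := fun b => rfl
    have hs_symm_apply : ∀ b : B, s.symm b = c • b := by
      intro b
      have : s.symm b = (Units.mk0 (c⁻¹ : ℝ) hcinv)⁻¹ • b := rfl
      rw [this]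
      have : ((Units.mk0 (c⁻¹ : ℝ) hcinv)⁻¹ : ℝˣ) • b = (((Units.mk0 (c⁻¹ : ℝ) hcinv)⁻¹ : ℝˣ) : ℝ) • b := rfl
      rw [this]
      norm_num
    set w : Z ≃L[ℝ] B := u.trans s with hw
    have hw_apply : ∀ x : Z, w x = c⁻¹ • u x := fun x => rfl
    have hw_symm_apply : ∀ b : B, w.symm b = u.symm (c • b) := by
      intro b
      have : w.symm b = u.symm (s.symm b) := rfl
      rw [this, hs_symm_apply]
    refine ⟨B, w, ?_, ?_⟩
    · refine ContinuousLinearMap.opNorm_le_bound _ zero_le_one fun x => by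
        have h1 : ((w : Z →L[ℝ] B) x) = c⁻¹ • u x := hw_apply x
        rw [h1, norm_smul]
        have h2 : ‖u x‖ ≤ c * ‖x‖ := (u : Z →L[ℝ] B).le_opNorm x
        have h3 : ‖(c⁻¹ : ℝ)‖ = c⁻¹ := by
          rw [Real.norm_eq_abs, abs_of_pos (inv_pos.mpr hpos)]
        rw [h3, one_mul]
        calc c⁻¹ * ‖u x‖ ≤ c⁻¹ * (c * ‖x‖) :=
              mul_le_mul_of_nonneg_left h2 (le_of_lt (inv_pos.mpr hpos))
          _ = ‖x‖ := by field_simp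
    · refine ContinuousLinearMap.opNorm_le_bound _ hC fun b => ?_
      have h1 : ((w.symm : B →L[ℝ] Z) b) = u.symm (c • b) := hw_symm_apply b
      rw [h1]
      have h2 : ‖u.symm (c • b)‖ ≤ ‖(u.symm : B →L[ℝ] Z)‖ * ‖c • b‖ :=
        (u.symm : B →L[ℝ] Z).le_opNorm _
      have h3 : ‖c • b‖ = c * ‖b‖ := by
        rw [norm_smul, Real.norm_eq_abs, abs_of_pos hpos]
      refine h2.trans ?_
      rw [h3]
      calc ‖(u.symm : B →L[ℝ] Z)‖ * (c * ‖b‖) = (c * ‖(u.symm : B →L[ℝ] Z)‖) * ‖b‖ := by ring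
        _ ≤ C * ‖b‖ := mul_le_mul_of_nonneg_right hu (norm_nonneg _)

end EmbMachinery2

section LpTrunc

variable (p : ℝ≥0∞) [Fact (1 ≤ p)]
variable {X : Type*} [NormedAddCommGroup X] [NormedSpace ℝ X]

theorem q_pos (hpt : p ≠ ∞) : 0 < p.toReal :=
  ENNReal.toReal_pos (lt_of_lt_of_le zero_lt_one Fact.out).ne' hpt

theorem rpow_recover {a q : ℝ} (ha : 0 ≤ a) (hq : q ≠ 0) : (a ^ q) ^ (1 / q) = a := by
  rw [← Real.rpow_mul ha, mul_one_div_cancel hq, Real.rpow_one]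

theorem lp_single_add (i : ℕ) (a b : X) :
    (lp.single p i (a + b) : lp (fun _ : ℕ => X) p) =
      lp.single p i a + lp.single p i b := by
  refine lp.ext (funext fun j => ?_)
  by_cases h : j = i
  · subst h
    simp [lp.single_apply_self, lp.coeFn_add]
  · simp [lp.single_apply_ne p i _ h, lp.coeFn_add]

/-- Truncation to the first `n` coordinates, as a linear map. -/
noncomputable def truncL (n : ℕ) : lp (fun _ : ℕ => X) p →ₗ[ℝ] lp (fun _ : ℕ => X) p where
  toFun f := ∑ i ∈ Finset.range n, lp.single p i (f i)
  map_add' f g := by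
    rw [← Finset.sum_add_distrib]
    refine Finset.sum_congr rfl fun i _ => ?_
    rw [lp.coeFn_add]
    exact lp_single_add p i (f i) (g i)
  map_smul' c f := by
    simp only [RingHom.id_apply]
    rw [Finset.smul_sum]
    refine Finset.sum_congr rfl fun i _ => ?_
    rw [lp.coeFn_smul, Pi.smul_apply]
    exact lp.single_smul (E := fun _ : ℕ => X) p i c (f i)

theorem truncL_apply (n : ℕ) (f : lp (fun _ : ℕ => X) p) (j : ℕ) :
    (truncL p n f : lp (fun _ : ℕ => X) p) j = if j ∈ Finset.range n then f j else 0 := by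
  have : (truncL p n f : lp (fun _ : ℕ => X) p) =
      ∑ i ∈ Finset.range n, lp.single p i (f i) := rfl
  rw [this]
  simp only [lp.coeFn_sum, Finset.sum_apply, lp.single_apply, Finset.sum_dite_eq,
    Pi.single_apply, Finset.sum_ite_eq]

theorem truncL_norm_pow (hpt : p ≠ ∞) (n : ℕ) (f : lp (fun _ : ℕ => X) p) :
    ‖truncL p n f‖ ^ p.toReal = ∑ i ∈ Finset.range n, ‖f i‖ ^ p.toReal :=
  lp.norm_sum_single (q_pos p hpt) _ _

theorem truncL_compl_norm_pow (hpt : p ≠ ∞) (n : ℕ) (f : lp (fun _ : ℕ => X) p) :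
    ‖f - truncL p n f‖ ^ p.toReal = ‖f‖ ^ p.toReal - ∑ i ∈ Finset.range n, ‖f i‖ ^ p.toReal :=
  lp.norm_compl_sum_single (q_pos p hpt) f _

theorem truncL_norm_le (hpt : p ≠ ∞) (n : ℕ) (f : lp (fun _ : ℕ => X) p) :
    ‖truncL p n f‖ ≤ ‖f‖ := by
  have hq := q_pos p hpt
  refine (Real.rpow_le_rpow_iff (norm_nonneg _) (norm_nonneg _) hq).mp ?_
  rw [truncL_norm_pow p hpt]
  have h1 := truncL_compl_norm_pow p hpt n f
  have h2 : 0 ≤ ‖f - truncL p n f‖ ^ p.toReal := Real.rpow_nonneg (norm_nonneg _) _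
  linarith

theorem truncL_compl_norm_le (hpt : p ≠ ∞) (n : ℕ) (f : lp (fun _ : ℕ => X) p) :
    ‖f - truncL p n f‖ ≤ ‖f‖ := by
  have hq := q_pos p hpt
  refine (Real.rpow_le_rpow_iff (norm_nonneg _) (norm_nonneg _) hq).mp ?_
  rw [truncL_compl_norm_pow p hpt]
  have h2 : (0:ℝ) ≤ ∑ i ∈ Finset.range n, ‖f i‖ ^ p.toReal :=
    Finset.sum_nonneg fun i _ => Real.rpow_nonneg (norm_nonneg _) _
  linarith

theorem truncL_tendsto (hpt : p ≠ ∞) (f : lp (fun _ : ℕ => X) p) :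
    Filter.Tendsto (fun n => ‖f - truncL p n f‖) Filter.atTop (nhds 0) := by
  have hq := q_pos p hpt
  have hsum := (lp.hasSum_norm hq f).tendsto_sum_nat
  have h1 : Filter.Tendsto (fun n => ‖f‖ ^ p.toReal - ∑ i ∈ Finset.range n, ‖f i‖ ^ p.toReal)
      Filter.atTop (nhds 0) := by
    have := hsum.const_sub (‖f‖ ^ p.toReal)
    simpa using this
  have h2 : Filter.Tendsto
      (fun n => (‖f‖ ^ p.toReal - ∑ i ∈ Finset.range n, ‖f i‖ ^ p.toReal) ^ (1 / p.toReal))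
      Filter.atTop (nhds 0) := by
    have := h1.rpow_const (p := 1 / p.toReal) (Or.inr (by positivity))
    rwa [Real.zero_rpow (by positivity : 1 / p.toReal ≠ 0)] at this
  refine h2.congr fun n => ?_
  rw [← truncL_compl_norm_pow p hpt, rpow_recover (norm_nonneg _) hq.ne']

end LpTrunc

section TruncApprox

variable (p : ℝ≥0∞) [Fact (1 ≤ p)]
variable {X : Type*} [NormedAddCommGroup X] [NormedSpace ℝ X]

theorem trunc_approx (hpt : p ≠ ∞) (A : Subspace ℝ (lp (fun _ : ℕ => X) p))
    [FiniteDimensional ℝ A] {δ : ℝ} (hδ : 0 < δ) :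
    ∃ n : ℕ, ∀ x : A, ‖(x : lp (fun _ : ℕ => X) p) - truncL p n x‖ ≤ δ * ‖x‖ := by
  have hsph : IsCompact (Metric.sphere (0 : A) 1) := isCompact_sphere _ _
  have htb := hsph.totallyBounded
  rw [Metric.totallyBounded_iff] at htb
  obtain ⟨t, htfin, htcover⟩ := htb (δ / 3) (by linarith)
  have hev : ∀ᶠ n in Filter.atTop, ∀ y ∈ t,
      ‖(y : lp (fun _ : ℕ => X) p) - truncL p n y‖ < δ / 3 := by
    rw [Filter.eventually_all_finite htfin]
    intro y _
    exact (truncL_tendsto p hpt (y : lp (fun _ : ℕ => X) p)).eventually_lt_const (by linarith)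
  obtain ⟨n, hn⟩ := hev.exists
  refine ⟨n, fun x => ?_⟩
  by_cases hx : x = 0
  · subst hx
    simp only [Submodule.coe_zero, map_zero, sub_zero, norm_zero, mul_zero, le_refl]
  · set r : ℝ := ‖x‖ with hr
    have hrpos : 0 < r := norm_pos_iff.mpr hx
    set x' : A := r⁻¹ • x with hx'
    have hx'n : ‖x'‖ = 1 := by
      rw [hx', norm_smul, Real.norm_eq_abs, abs_of_pos (inv_pos.mpr hrpos)]
      field_simp
      exact hr.symm
    have hx'mem : x' ∈ Metric.sphere (0 : A) 1 := by
      rw [mem_sphere_zero_iff_norm]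
      exact hx'n
    obtain ⟨y, hy, hxy⟩ := Set.mem_iUnion₂.mp (htcover hx'mem)
    have hxy' : ‖x' - y‖ < δ / 3 := by
      rw [← dist_eq_norm]
      exact Metric.mem_ball.mp hxy
    -- bound for the normalized vector
    have key : ‖(x' : lp (fun _ : ℕ => X) p) - truncL p n x'‖ ≤ 2 * δ / 3 := by
      have hsplit : (x' : lp (fun _ : ℕ => X) p) - truncL p n x' =
          (((x' - y : A) : lp (fun _ : ℕ => X) p) - truncL p n ((x' - y : A) : lp _ p)) +
            ((y : lp (fun _ : ℕ => X) p) - truncL p n y) := by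
        push_cast
        rw [map_sub]
        abel
      rw [hsplit]
      refine (norm_add_le _ _).trans ?_
      have h1 : ‖((x' - y : A) : lp (fun _ : ℕ => X) p) -
          truncL p n ((x' - y : A) : lp (fun _ : ℕ => X) p)‖ ≤ ‖x' - y‖ := by
        have := truncL_compl_norm_le p hpt n ((x' - y : A) : lp (fun _ : ℕ => X) p)
        simpa using this
      have h2 := hn y hy
      have := hxy'.le
      linarith
    -- scale back
    have hcoe : (x : lp (fun _ : ℕ => X) p) = r • (x' : lp (fun _ : ℕ => X) p) := by
      rw [hx']
      push_cast
      rw [smul_smul]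
      field_simp
      rw [one_smul]
    calc ‖(x : lp (fun _ : ℕ => X) p) - truncL p n x‖
        = ‖r • ((x' : lp (fun _ : ℕ => X) p) - truncL p n x')‖ := by
          rw [hcoe, smul_sub, map_smul]
      _ = r * ‖(x' : lp (fun _ : ℕ => X) p) - truncL p n x'‖ := by
          rw [norm_smul, Real.norm_eq_abs, abs_of_pos hrpos]
      _ ≤ r * (2 * δ / 3) := mul_le_mul_of_nonneg_left key hrpos.le
      _ ≤ δ * r := by nlinarith
      _ = δ * ‖x‖ := rfl

end TruncApprox

section Supported

variable (p : ℝ≥0∞) [Fact (1 ≤ p)]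
variable {X : Type} [NormedAddCommGroup X] [NormedSpace ℝ X]

/-- Evaluation at a coordinate, as a linear map. -/
def evalL (n : ℕ) : lp (fun _ : ℕ => X) p →ₗ[ℝ] X where
  toFun f := f n
  map_add' f g := by
    show (↑(f + g) : ℕ → X) n = (↑f : ℕ → X) n + (↑g : ℕ → X) n
    rw [lp.coeFn_add]; rfl
  map_smul' c f := by
    show (↑(c • f) : ℕ → X) n = c • (↑f : ℕ → X) n
    rw [lp.coeFn_smul]; rfl

theorem evalL_apply (n : ℕ) (f : lp (fun _ : ℕ => X) p) : evalL p n f = f n := rfl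

theorem supported_emb (hpt : p ≠ ∞)
    (H : ∀ A B : BanachSpace, FiniteDimensional ℝ A.carrier → FiniteDimensional ℝ B.carrier →
      FinRep A.carrier X → FinRep B.carrier X → FinRep (WithLp p (A.carrier × B.carrier)) X) :
    ∀ n : ℕ, ∀ S : Subspace ℝ (lp (fun _ : ℕ => X) p), FiniteDimensional ℝ S →
      (∀ f ∈ S, ∀ i : ℕ, n ≤ i → (f : ℕ → X) i = 0) →
      ∀ ε : ℝ, 0 < ε → Emb S X (1 + ε) := by
  intro n
  induction n with
  | zero =>
    intro S hSfd hsupp ε hε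
    have hzero : ∀ x : S, x = 0 := by
      intro x
      apply Subtype.ext
      apply lp.ext
      funext i
      exact hsupp (x : lp (fun _ : ℕ => X) p) x.2 i (Nat.zero_le i)
    have zli : S →ₗᵢ[ℝ] X :=
      ⟨0, fun x => by rw [hzero x]; simp⟩
    exact Emb.of_linearIsometry zli (emb_self (by linarith))
  | succ n IH =>
    intro S hSfd hsupp ε hε
    haveI := hSfd
    set ψ₁ : S →ₗ[ℝ] X := (evalL p n).comp S.subtype with hψ₁
    set ψ₂ : S →ₗ[ℝ] lp (fun _ : ℕ => X) p := (truncL p n).comp S.subtype with hψ₂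
    set A₁ : Subspace ℝ X := LinearMap.range ψ₁ with hA₁
    set S' : Subspace ℝ (lp (fun _ : ℕ => X) p) := LinearMap.range ψ₂ with hS'
    haveI : FiniteDimensional ℝ A₁ := inferInstance
    haveI : FiniteDimensional ℝ S' := inferInstance
    -- support property of S'
    have hS'supp : ∀ g ∈ S', ∀ i : ℕ, n ≤ i → (g : ℕ → X) i = 0 := by
      rintro g hg i hi
      obtain ⟨x, rfl⟩ := hg
      have : (ψ₂ x : ℕ → X) i = if i ∈ Finset.range n then ((x : lp (fun _ : ℕ => X) p) : ℕ → X) i else 0 :=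
        truncL_apply p n _ i
      rw [this, if_neg (by simp [Nat.not_lt.mpr hi])]
    -- IH gives embeddings, hence finite representability of S' in X
    have hS'rep : FinRep S' X := finRep_of_emb fun ε' hε' => IH S' inferInstance hS'supp ε' hε'
    have hA₁rep : FinRep A₁ X := finRep_of_li A₁.subtypeₗᵢ
    -- the ℓ_p product space
    haveI : FiniteDimensional ℝ (WithLp p (A₁ × S')) :=
      (WithLp.linearEquiv p ℝ (A₁ × S')).symm.finiteDimensional
    have hW : FinRep (WithLp p (A₁ × S')) X :=
      H ⟨A₁⟩ ⟨S'⟩ inferInstance inferInstance hA₁rep hS'rep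
    have embW : Emb (WithLp p (A₁ × S')) X (1 + ε) := emb_of_finRep hW hε
    -- the isometric splitting of S into the product
    have hq := q_pos p hpt
    set χlin : S →ₗ[ℝ] WithLp p (A₁ × S') :=
      (WithLp.linearEquiv p ℝ (A₁ × S')).symm.toLinearMap.comp
        ((ψ₁.rangeRestrict).prod (ψ₂.rangeRestrict)) with hχlin
    have hnorm : ∀ x : S, ‖χlin x‖ = ‖x‖ := by
      intro x
      set f : lp (fun _ : ℕ => X) p := (x : lp (fun _ : ℕ => X) p) with hf
      have hfst : ‖(χlin x).fst‖ = ‖(f : ℕ → X) n‖ := rfl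
      have hsnd : ‖(χlin x).snd‖ = ‖truncL p n f‖ := rfl
      have hnw : ‖χlin x‖ =
          (‖(χlin x).fst‖ ^ p.toReal + ‖(χlin x).snd‖ ^ p.toReal) ^ (1 / p.toReal) :=
        WithLp.prod_norm_eq_add hq _
      -- f equals its (n+1)-truncation
      have htr : f = truncL p (n + 1) f := by
        apply lp.ext
        funext i
        rw [truncL_apply]
        by_cases hi : i ∈ Finset.range (n + 1)
        · rw [if_pos hi]
        · rw [if_neg hi]
          exact hsupp f x.2 i (by simpa [Nat.lt_succ_iff] using hi)
      have hfq : ‖f‖ ^ p.toReal = ∑ i ∈ Finset.range (n + 1), ‖(f : ℕ → X) i‖ ^ p.toReal := by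
        conv_lhs => rw [htr]
        exact truncL_norm_pow p hpt (n + 1) f
      have htq : ‖truncL p n f‖ ^ p.toReal = ∑ i ∈ Finset.range n, ‖(f : ℕ → X) i‖ ^ p.toReal :=
        truncL_norm_pow p hpt n f
      rw [hnw, hfst, hsnd, htq]
      have hsum : ‖(f : ℕ → X) n‖ ^ p.toReal + ∑ i ∈ Finset.range n, ‖(f : ℕ → X) i‖ ^ p.toReal
          = ‖f‖ ^ p.toReal := by
        rw [hfq, Finset.sum_range_succ]
        ring
      rw [hsum, rpow_recover (norm_nonneg _) hq.ne']
      rfl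
    have χ : S →ₗᵢ[ℝ] WithLp p (A₁ × S') := ⟨χlin, hnorm⟩
    exact Emb.of_linearIsometry χ embW

theorem lp_finRep (hpt : p ≠ ∞)
    (H : ∀ A B : BanachSpace, FiniteDimensional ℝ A.carrier → FiniteDimensional ℝ B.carrier →
      FinRep A.carrier X → FinRep B.carrier X → FinRep (WithLp p (A.carrier × B.carrier)) X) :
    FinRep (lp (fun _ : ℕ => X) p) X := by
  intro ε hε A hA
  haveI := hA
  set η : ℝ := min (ε / 3) 1 with hηdef
  have hη : 0 < η := lt_min (by linarith) one_pos
  have hη1 : η ≤ 1 := min_le_right _ _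
  have hηε : 3 * η ≤ ε := by
    have := min_le_left (ε / 3) 1
    nlinarith
  set δ : ℝ := η / (1 + η) with hδdef
  have hδpos : 0 < δ := div_pos hη (by linarith)
  have hδ1 : δ < 1 := by
    rw [hδdef, div_lt_one (by linarith)]
    linarith
  have h1δ : (1 : ℝ) - δ = 1 / (1 + η) := by
    rw [hδdef]
    field_simp
    ring
  have h1δinv : ((1 : ℝ) - δ)⁻¹ = 1 + η := by
    rw [h1δ]
    simp
  obtain ⟨n, hn⟩ := trunc_approx p hpt A hδpos
  set φ : A →ₗ[ℝ] lp (fun _ : ℕ => X) p := (truncL p n).comp A.subtype with hφ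
  have hub : ∀ x : A, ‖φ x‖ ≤ ‖x‖ := fun x => truncL_norm_le p hpt n _
  have hlb : ∀ x : A, (1 - δ) * ‖x‖ ≤ ‖φ x‖ := by
    intro x
    have h1 : ‖(x : lp (fun _ : ℕ => X) p)‖ ≤
        ‖(x : lp (fun _ : ℕ => X) p) - truncL p n (x : lp (fun _ : ℕ => X) p)‖ +
          ‖truncL p n (x : lp (fun _ : ℕ => X) p)‖ := by
      have := norm_add_le
        ((x : lp (fun _ : ℕ => X) p) - truncL p n (x : lp (fun _ : ℕ => X) p))
        (truncL p n (x : lp (fun _ : ℕ => X) p))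
      simpa using this
    have h2 := hn x
    have h3 : ‖(x : lp (fun _ : ℕ => X) p)‖ = ‖x‖ := rfl
    have h4 : ‖φ x‖ = ‖truncL p n (x : lp (fun _ : ℕ => X) p)‖ := rfl
    rw [h4]
    rw [h3] at h1
    linarith
  have hinj : Function.Injective φ := by
    intro a b hab
    have h0 : φ (a - b) = 0 := by rw [map_sub, hab, sub_self]
    have := hlb (a - b)
    rw [h0, norm_zero] at this
    have hab' : ‖a - b‖ ≤ 0 := by nlinarith
    have : a - b = 0 := norm_le_zero_iff.mp hab'
    exact sub_eq_zero.mp this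
  set B : Subspace ℝ (lp (fun _ : ℕ => X) p) := LinearMap.range φ with hB
  haveI : FiniteDimensional ℝ B := inferInstance
  have hBsupp : ∀ g ∈ B, ∀ i : ℕ, n ≤ i → (g : ℕ → X) i = 0 := by
    rintro g hg i hi
    obtain ⟨x, rfl⟩ := hg
    have : (φ x : ℕ → X) i =
        if i ∈ Finset.range n then ((x : lp (fun _ : ℕ => X) p) : ℕ → X) i else 0 :=
      truncL_apply p n _ i
    rw [this, if_neg (by simp [Nat.not_lt.mpr hi])]
  have embB : Emb B X (1 + η) := supported_emb p hpt H n B inferInstance hBsupp η hη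
  set e : A ≃L[ℝ] B := (LinearEquiv.ofInjective φ hinj).toContinuousLinearEquiv with he
  have hb1 : ‖(e : A →L[ℝ] B)‖ ≤ 1 :=
    ContinuousLinearMap.opNorm_le_bound _ zero_le_one fun x => by
      have h1 : ((e : A →L[ℝ] B) x) = e x := rfl
      have h2 : ‖e x‖ = ‖φ x‖ := rfl
      rw [h1, h2, one_mul]
      exact hub x
  have hb2 : ‖(e.symm : B →L[ℝ] A)‖ ≤ 1 + η :=
    ContinuousLinearMap.opNorm_le_bound _ (by linarith) fun y => by
      have h1 : ((e.symm : B →L[ℝ] A) y) = e.symm y := rfl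
      rw [h1]
      set x := e.symm y with hx
      have hy : e x = y := e.apply_symm_apply y
      have h2 : ‖y‖ = ‖φ x‖ := by rw [← hy]; rfl
      have h3 := hlb x
      rw [← h2] at h3
      -- (1-δ) ‖x‖ ≤ ‖y‖, so ‖x‖ ≤ (1-δ)⁻¹ ‖y‖ = (1+η)‖y‖
      have h4 : ‖x‖ ≤ (1 - δ)⁻¹ * ‖y‖ := by
        have hpos : (0:ℝ) < 1 - δ := by linarith
        calc ‖x‖ = (1 - δ)⁻¹ * ((1 - δ) * ‖x‖) := by field_simp
          _ ≤ (1 - δ)⁻¹ * ‖y‖ := mul_le_mul_of_nonneg_left h3 (by positivity)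
      rwa [h1δinv] at h4
  have emb1 : Emb A X ((‖(e : A →L[ℝ] B)‖ * ‖(e.symm : B →L[ℝ] A)‖) * (1 + η)) :=
    Emb.of_equiv e embB
  refine emb1.mono ?_
  have hprod : ‖(e : A →L[ℝ] B)‖ * ‖(e.symm : B →L[ℝ] A)‖ ≤ 1 + η := by
    calc ‖(e : A →L[ℝ] B)‖ * ‖(e.symm : B →L[ℝ] A)‖ ≤ 1 * (1 + η) :=
          mul_le_mul hb1 hb2 (ContinuousLinearMap.opNorm_nonneg _) zero_le_one
      _ = 1 + η := one_mul _
  calc (‖(e : A →L[ℝ] B)‖ * ‖(e.symm : B →L[ℝ] A)‖) * (1 + η) ≤ (1 + η) * (1 + η) :=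
        mul_le_mul_of_nonneg_right hprod (by linarith)
    _ ≤ 1 + ε := by nlinarith

end Supported

section Forward

variable (p : ℝ≥0∞) [Fact (1 ≤ p)]

/-- Embedding of an `ℓ_p`-pair of subspaces of `Y` into `lp Y`. -/
theorem two_coord_isometry (hpt : p ≠ ∞) {Y : Type*} [NormedAddCommGroup Y] [NormedSpace ℝ Y]
    (E F : Subspace ℝ Y) :
    ∃ ι : WithLp p (E × F) →ₗᵢ[ℝ] lp (fun _ : ℕ => Y) p, True := by
  have hq := q_pos p hpt
  set L : WithLp p (E × F) →ₗ[ℝ] lp (fun _ : ℕ => Y) p :=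
    { toFun := fun z => lp.single p 0 ((z.fst : Y)) + lp.single p 1 ((z.snd : Y))
      map_add' := fun z w => by
        have h1 : ((z + w).fst : Y) = (z.fst : Y) + (w.fst : Y) := rfl
        have h2 : ((z + w).snd : Y) = (z.snd : Y) + (w.snd : Y) := rfl
        show (lp.single p 0 ((z + w).fst : Y) + lp.single p 1 ((z + w).snd : Y) :
            lp (fun _ : ℕ => Y) p) =
          (lp.single p 0 ((z).fst : Y) + lp.single p 1 ((z).snd : Y)) +
            (lp.single p 0 ((w).fst : Y) + lp.single p 1 ((w).snd : Y))
        rw [h1, h2, lp_single_add, lp_single_add]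
        abel
      map_smul' := fun c z => by
        have h1 : ((c • z).fst : Y) = c • (z.fst : Y) := rfl
        have h2 : ((c • z).snd : Y) = c • (z.snd : Y) := rfl
        show (lp.single p 0 ((c • z).fst : Y) + lp.single p 1 ((c • z).snd : Y) :
            lp (fun _ : ℕ => Y) p) =
          c • (lp.single p 0 ((z).fst : Y) + lp.single p 1 ((z).snd : Y))
        rw [h1, h2, lp.single_smul, lp.single_smul, smul_add] } with hL
  refine ⟨⟨L, fun z => ?_⟩, trivial⟩
  set f : (i : ℕ) → Y := fun i => if i = 0 then (z.fst : Y) else if i = 1 then (z.snd : Y) else 0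
    with hf
  have hsum : L z = ∑ i ∈ ({0, 1} : Finset ℕ), lp.single p i (f i) := by
    rw [Finset.sum_pair (by norm_num : (0:ℕ) ≠ 1)]
    have h0 : f 0 = (z.fst : Y) := rfl
    have h1 : f 1 = (z.snd : Y) := rfl
    rw [h0, h1]
    rfl
  have hpow : ‖L z‖ ^ p.toReal = ‖(z.fst : Y)‖ ^ p.toReal + ‖(z.snd : Y)‖ ^ p.toReal := by
    rw [hsum, lp.norm_sum_single hq f ({0, 1} : Finset ℕ),
      Finset.sum_pair (by norm_num : (0:ℕ) ≠ 1)]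
    rfl
  have hnz : ‖z‖ = (‖z.fst‖ ^ p.toReal + ‖z.snd‖ ^ p.toReal) ^ (1 / p.toReal) :=
    WithLp.prod_norm_eq_add hq z
  have : ‖L z‖ = (‖L z‖ ^ p.toReal) ^ (1 / p.toReal) :=
    (rpow_recover (norm_nonneg _) hq.ne').symm
  rw [this, hpow, hnz]
  rfl

theorem prod_pointwise_bound (hpt : p ≠ ∞) {E F E' F' : Type*}
    [NormedAddCommGroup E] [NormedSpace ℝ E] [NormedAddCommGroup F] [NormedSpace ℝ F]
    [NormedAddCommGroup E'] [NormedSpace ℝ E'] [NormedAddCommGroup F'] [NormedSpace ℝ F']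
    {M : ℝ} (hM : 0 ≤ M) {a : E} {b : F} {a' : E'} {b' : F'}
    (ha : ‖a'‖ ≤ M * ‖a‖) (hb : ‖b'‖ ≤ M * ‖b‖)
    (z : WithLp p (E × F)) (w : WithLp p (E' × F'))
    (hz1 : z.fst = a) (hz2 : z.snd = b) (hw1 : w.fst = a') (hw2 : w.snd = b') :
    ‖w‖ ≤ M * ‖z‖ := by
  have hq := q_pos p hpt
  rw [WithLp.prod_norm_eq_add hq w, WithLp.prod_norm_eq_add hq z, hw1, hw2, hz1, hz2]
  have h1 : ‖a'‖ ^ p.toReal + ‖b'‖ ^ p.toReal ≤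
      (M * ‖a‖) ^ p.toReal + (M * ‖b‖) ^ p.toReal :=
    add_le_add (Real.rpow_le_rpow (norm_nonneg _) ha hq.le)
      (Real.rpow_le_rpow (norm_nonneg _) hb hq.le)
  have h2 : (M * ‖a‖) ^ p.toReal + (M * ‖b‖) ^ p.toReal =
      M ^ p.toReal * (‖a‖ ^ p.toReal + ‖b‖ ^ p.toReal) := by
    rw [Real.mul_rpow hM (norm_nonneg _), Real.mul_rpow hM (norm_nonneg _)]
    ring
  calc (‖a'‖ ^ p.toReal + ‖b'‖ ^ p.toReal) ^ (1 / p.toReal)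
      ≤ (M ^ p.toReal * (‖a‖ ^ p.toReal + ‖b‖ ^ p.toReal)) ^ (1 / p.toReal) := by
        refine Real.rpow_le_rpow (by positivity) ?_ (by positivity)
        rw [← h2]; exact h1
    _ = M * (‖a‖ ^ p.toReal + ‖b‖ ^ p.toReal) ^ (1 / p.toReal) := by
        rw [Real.mul_rpow (by positivity) (by positivity), rpow_recover hM hq.ne']

end Forward

section Forward2

variable (p : ℝ≥0∞) [Fact (1 ≤ p)]

theorem prodLp_finRep_lp (hpt : p ≠ ∞) {Y A B : Type*}
    [NormedAddCommGroup Y] [NormedSpace ℝ Y]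
    [NormedAddCommGroup A] [NormedSpace ℝ A] [NormedAddCommGroup B] [NormedSpace ℝ B]
    [FiniteDimensional ℝ A] [FiniteDimensional ℝ B]
    (hA : FinRep A Y) (hB : FinRep B Y) :
    FinRep (WithLp p (A × B)) (lp (fun _ : ℕ => Y) p) := by
  apply finRep_of_emb
  intro ε hε
  obtain ⟨A', u, hu1, hu2⟩ := Emb.normalized (by linarith) (emb_of_finRep hA hε)
  obtain ⟨B', v, hv1, hv2⟩ := Emb.normalized (by linarith) (emb_of_finRep hB hε)
  haveI : FiniteDimensional ℝ A' := u.toLinearEquiv.finiteDimensional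
  haveI : FiniteDimensional ℝ B' := v.toLinearEquiv.finiteDimensional
  set w : WithLp p (A × B) ≃L[ℝ] WithLp p (A' × B') :=
    (WithLp.prodContinuousLinearEquiv p ℝ A B).trans
      ((u.prodCongr v).trans (WithLp.prodContinuousLinearEquiv p ℝ A' B').symm) with hw
  have hwfst : ∀ z : WithLp p (A × B), (w z).fst = u z.fst := fun _ => rfl
  have hwsnd : ∀ z : WithLp p (A × B), (w z).snd = v z.snd := fun _ => rfl
  have hwsfst : ∀ z : WithLp p (A' × B'), (w.symm z).fst = u.symm z.fst := fun _ => rfl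
  have hwssnd : ∀ z : WithLp p (A' × B'), (w.symm z).snd = v.symm z.snd := fun _ => rfl
  have hwb : ‖(w : WithLp p (A × B) →L[ℝ] WithLp p (A' × B'))‖ ≤ 1 :=
    ContinuousLinearMap.opNorm_le_bound _ zero_le_one fun z => by
      have h0 : ((w : WithLp p (A × B) →L[ℝ] WithLp p (A' × B')) z) = w z := rfl
      rw [h0]
      refine prod_pointwise_bound p hpt zero_le_one ?_ ?_ z (w z) rfl rfl (hwfst z) (hwsnd z)
      · have := (u : A →L[ℝ] A').le_opNorm z.fst
        have h1 : ((u : A →L[ℝ] A') z.fst) = u z.fst := rfl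
        rw [h1] at this
        refine this.trans ?_
        exact mul_le_mul_of_nonneg_right hu1 (norm_nonneg _)
      · have := (v : B →L[ℝ] B').le_opNorm z.snd
        have h1 : ((v : B →L[ℝ] B') z.snd) = v z.snd := rfl
        rw [h1] at this
        refine this.trans ?_
        exact mul_le_mul_of_nonneg_right hv1 (norm_nonneg _)
  have hwsb : ‖(w.symm : WithLp p (A' × B') →L[ℝ] WithLp p (A × B))‖ ≤ 1 + ε :=
    ContinuousLinearMap.opNorm_le_bound _ (by linarith) fun z => by
      have h0 : ((w.symm : WithLp p (A' × B') →L[ℝ] WithLp p (A × B)) z) = w.symm z := rfl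
      rw [h0]
      refine prod_pointwise_bound p hpt (by linarith : (0:ℝ) ≤ 1 + ε) ?_ ?_ z (w.symm z)
        rfl rfl (hwsfst z) (hwssnd z)
      · have := (u.symm : A' →L[ℝ] A).le_opNorm z.fst
        have h1 : ((u.symm : A' →L[ℝ] A) z.fst) = u.symm z.fst := rfl
        rw [h1] at this
        refine this.trans ?_
        exact mul_le_mul_of_nonneg_right hu2 (norm_nonneg _)
      · have := (v.symm : B' →L[ℝ] B).le_opNorm z.snd
        have h1 : ((v.symm : B' →L[ℝ] B) z.snd) = v.symm z.snd := rfl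
        rw [h1] at this
        refine this.trans ?_
        exact mul_le_mul_of_nonneg_right hv2 (norm_nonneg _)
  obtain ⟨ι, -⟩ := two_coord_isometry p hpt A' B'
  haveI : FiniteDimensional ℝ (WithLp p (A' × B')) :=
    (WithLp.linearEquiv p ℝ (A' × B')).symm.finiteDimensional
  have base : Emb (WithLp p (A' × B')) (lp (fun _ : ℕ => Y) p) 1 :=
    Emb.of_linearIsometry ι (emb_self le_rfl)
  have emb1 := Emb.of_equiv w base
  refine emb1.mono ?_
  calc (‖(w : WithLp p (A × B) →L[ℝ] WithLp p (A' × B'))‖ *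
      ‖(w.symm : WithLp p (A' × B') →L[ℝ] WithLp p (A × B))‖) * 1
      ≤ (1 * (1 + ε)) * 1 := by
        refine mul_le_mul_of_nonneg_right ?_ zero_le_one
        exact mul_le_mul hwb hwsb (ContinuousLinearMap.opNorm_nonneg _) zero_le_one
    _ = 1 + ε := by ring

end Forward2

section Single0

variable (p : ℝ≥0∞) [Fact (1 ≤ p)]
variable {X : Type*} [NormedAddCommGroup X] [NormedSpace ℝ X]

/-- The isometric embedding of `X` into `lp X` at coordinate `0`. -/
noncomputable def single0 (hpt : p ≠ ∞) : X →ₗᵢ[ℝ] lp (fun _ : ℕ => X) p where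
  toLinearMap :=
    { toFun := fun x => lp.single p 0 x
      map_add' := fun a b => lp_single_add p 0 a b
      map_smul' := fun c x => by
        simp only [RingHom.id_apply]
        exact lp.single_smul (E := fun _ : ℕ => X) p 0 c x }
  norm_map' := fun x => lp.norm_single (E := fun _ : ℕ => X) (lt_of_lt_of_le zero_lt_one Fact.out) 0 x

end Single0

/-- `X` is `p`-divisible iff the `ℓ_p`-sum of every two finite-dimensional spaces finitely
representable in `X` is finitely representable in `X`. -/
theorem pDivisible_iff_prodLp_finRep
    (p : ℝ≥0∞) [Fact (1 ≤ p)] (hp : p ≠ ∞)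
    (X : Type) [NormedAddCommGroup X] [NormedSpace ℝ X] [CompleteSpace X] :
    PDivisible p Fact.out X ↔
      ∀ A B : BanachSpace, FiniteDimensional ℝ A.carrier → FiniteDimensional ℝ B.carrier →
        FinRep A.carrier X → FinRep B.carrier X →
          FinRep (WithLp p (A.carrier × B.carrier)) X := by
  constructor
  · rintro ⟨Yb, h1, h2⟩ A B fdA fdB hA hB
    haveI := fdA; haveI := fdB
    have hAY : FinRep A.carrier Yb.carrier := finRep_trans hA h1.1
    have hBY : FinRep B.carrier Yb.carrier := finRep_trans hB h1.1
    have h3 : FinRep (WithLp p (A.carrier × B.carrier)) (lp (fun _ : ℕ => Yb.carrier) p) :=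
      prodLp_finRep_lp p hp hAY hBY
    exact finRep_trans h3 h2.2
  · intro H
    exact ⟨⟨X⟩, ⟨finRep_refl, finRep_refl⟩,
      ⟨finRep_of_li (single0 p hp), lp_finRep p hp H⟩⟩
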